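/- Let ξ₀, ξ₁ ∈ ℂ with (1 − ξ₀ξ̄₀)ξ̄₁ − 2ξ̄₀ ≠ 0, and define ξ₂ = (2ξ₀ξ̄₁ + 1 − ξ₀ξ̄₀)/((1 − ξ₀ξ̄₀)ξ̄₁ − 2ξ̄₀). Then u(ξ₂) = u(ξ₁) − 2⟨u(ξ₁), u(ξ₀)⟩·u(ξ₀); i.e. ξ₂ is the direction obtained from the incoming ray direction ξ₁ by the law of mirror reflection in a surface with unit normal u(ξ₀). -/

import Mathlib

open ComplexConjugate

/-- The unit vector in `ℝ³ = ℂ × ℝ` obtained from `ξ ∈ ℂ` by inverse stereographic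
projection from the south pole of the unit sphere. -/
noncomputable def stereoDir (ξ : ℂ) : ℂ × ℝ :=
  (2 * ξ / (1 + ξ * conj ξ), (1 - Complex.normSq ξ) / (1 + Complex.normSq ξ))

/-- The Euclidean inner product on `ℝ³ = ℂ × ℝ`. -/
noncomputable def euclInner (p q : ℂ × ℝ) : ℝ :=
  (p.1 * conj q.1).re + p.2 * q.2

/-- The direction `ξ₂ = (2ξ₀ξ̄₁ + 1 − ξ₀ξ̄₀)/((1 − ξ₀ξ̄₀)ξ̄₁ − 2ξ̄₀)` is
obtained from the incoming ray direction `ξ₁` by the law of mirror reflection in a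
surface with unit normal `stereoDir ξ₀`. -/
lemma stereoDir_fst (ξ : ℂ) :
    (stereoDir ξ).1 = 2 * ξ / (((1 + Complex.normSq ξ : ℝ)) : ℂ) := by
  simp [stereoDir, Complex.mul_conj]

lemma stereoDir_snd (ξ : ℂ) :
    (stereoDir ξ).2 = (1 - Complex.normSq ξ) / (1 + Complex.normSq ξ) := rfl

lemma stereoDir_div_fst (n D : ℂ) (hD : D ≠ 0)
    (hS : Complex.normSq n + Complex.normSq D ≠ 0) :
    (stereoDir (n / D)).1
      = 2 * n * conj D / (((Complex.normSq n + Complex.normSq D : ℝ)) : ℂ) := by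
  rw [stereoDir_fst, Complex.normSq_div]
  have hd : Complex.normSq D ≠ 0 := (Complex.normSq_pos.mpr hD).ne'
  have hA : (0:ℝ) < 1 + Complex.normSq n / Complex.normSq D := by
    have := div_nonneg (Complex.normSq_nonneg n) (Complex.normSq_nonneg D)
    linarith
  rw [div_eq_div_iff (Complex.ofReal_ne_zero.mpr hA.ne') (Complex.ofReal_ne_zero.mpr hS)]
  have hDc : (starRingEnd ℂ) D ≠ 0 := fun h => hD (by simpa using congrArg (starRingEnd ℂ) h)
  push_cast [← Complex.mul_conj]
  field_simp
  ring

lemma stereoDir_div_snd (n D : ℂ) (hD : D ≠ 0)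
    (hS : Complex.normSq n + Complex.normSq D ≠ 0) :
    (stereoDir (n / D)).2
      = (Complex.normSq D - Complex.normSq n) / (Complex.normSq n + Complex.normSq D) := by
  have hd : Complex.normSq D ≠ 0 := (Complex.normSq_pos.mpr hD).ne'
  have hA : (0:ℝ) < 1 + Complex.normSq n / Complex.normSq D := by
    have := div_nonneg (Complex.normSq_nonneg n) (Complex.normSq_nonneg D)
    linarith
  simp only [stereoDir, Complex.normSq_div]
  rw [div_eq_div_iff hA.ne' hS]
  field_simp
  ring

set_option maxHeartbeats 1000000 in
theorem reflection_law_stereographic (ξ₀ ξ₁ : ℂ)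
    (hden : (1 - ξ₀ * conj ξ₀) * conj ξ₁ - 2 * conj ξ₀ ≠ 0) :
    stereoDir ((2 * ξ₀ * conj ξ₁ + 1 - ξ₀ * conj ξ₀) /
        ((1 - ξ₀ * conj ξ₀) * conj ξ₁ - 2 * conj ξ₀)) =
      stereoDir ξ₁ -
        (2 * euclInner (stereoDir ξ₁) (stereoDir ξ₀)) • stereoDir ξ₀ := by
  
  have key : Complex.normSq (2 * ξ₀ * conj ξ₁ + 1 - ξ₀ * conj ξ₀)
      + Complex.normSq ((1 - ξ₀ * conj ξ₀) * conj ξ₁ - 2 * conj ξ₀)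
      = (1 + Complex.normSq ξ₀) ^ 2 * (1 + Complex.normSq ξ₁) := by
    apply Complex.ofReal_injective
    push_cast [← Complex.mul_conj]
    simp only [map_add, map_sub, map_mul, map_one, map_ofNat, Complex.conj_conj]
    ring
  have h0 : (0:ℝ) < 1 + Complex.normSq ξ₀ := by
    have := Complex.normSq_nonneg ξ₀; linarith
  have h1 : (0:ℝ) < 1 + Complex.normSq ξ₁ := by
    have := Complex.normSq_nonneg ξ₁; linarith
  have hS : Complex.normSq (2 * ξ₀ * conj ξ₁ + 1 - ξ₀ * conj ξ₀)
      + Complex.normSq ((1 - ξ₀ * conj ξ₀) * conj ξ₁ - 2 * conj ξ₀) ≠ 0 := by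
    rw [key]; exact (mul_pos (pow_pos h0 2) h1).ne'
  apply Prod.ext
  · rw [stereoDir_div_fst _ _ hden hS, key]
    simp only [Prod.fst_sub, Prod.smul_fst, euclInner, stereoDir_fst, stereoDir_snd,
      Complex.real_smul]
    obtain ⟨a, b⟩ := ξ₀
    obtain ⟨c, d⟩ := ξ₁
    have h0' : (1:ℝ) + (a * a + b * b) ≠ 0 := by positivity
    have h1' : (1:ℝ) + (c * c + d * d) ≠ 0 := by positivity
    simp only [Complex.ext_iff, Complex.normSq_mk, Complex.div_ofReal_re,
      Complex.div_ofReal_im, Complex.mul_re, Complex.mul_im, Complex.add_re,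
      Complex.add_im, Complex.sub_re, Complex.sub_im, Complex.one_re, Complex.one_im,
      Complex.ofReal_re, Complex.ofReal_im, Complex.conj_re, Complex.conj_im,
      Complex.re_ofNat, Complex.im_ofNat]
    constructor <;> · field_simp
                      ring
  · rw [stereoDir_div_snd _ _ hden hS, key]
    simp only [Prod.snd_sub, Prod.smul_snd, smul_eq_mul, euclInner, stereoDir_fst,
      stereoDir_snd]
    obtain ⟨a, b⟩ := ξ₀
    obtain ⟨c, d⟩ := ξ₁
    have h0' : (1:ℝ) + (a * a + b * b) ≠ 0 := by positivity
    have h1' : (1:ℝ) + (c * c + d * d) ≠ 0 := by positivity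
    simp only [Complex.normSq_apply, Complex.normSq_mk, Complex.div_ofReal_re, Complex.div_ofReal_im,
      Complex.mul_re, Complex.mul_im, Complex.add_re, Complex.add_im, Complex.sub_re,
      Complex.sub_im, Complex.one_re, Complex.one_im, Complex.ofReal_re,
      Complex.ofReal_im, Complex.conj_re, Complex.conj_im, Complex.re_ofNat,
      Complex.im_ofNat]
    field_simp
    ring
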